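/- Let K be a hexagonal trefoil knot with vertices labeled so that the Huh–Jeon intersection pattern holds. Let P2 and P5 be the planes of the triangular disks Δ2 and Δ5. Then the interior of edge e12 meets the plane P5 in exactly one point. -/

import Mathlib

noncomputable section

/-- Points of ℝ³. -/
abbrev E3 : Type := Fin 3 → ℝ

/-- A line in ℝ³: the affine span of two distinct points, viewed as a set. -/
def IsLine (L : Set E3) : Prop :=
  ∃ p q : E3, p ≠ q ∧ L = (affineSpan ℝ ({p, q} : Set E3) : Set E3)

/-- A plane: an affine subspace of dimension 2. -/
def IsPlane (P : AffineSubspace ℝ E3) : Prop :=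
  Module.finrank ℝ P.direction = 2

/-- A (combinatorial) hexagon: six vertices in ℝ³, joined cyclically.
Paper vertex `v_i` corresponds to `v (i-1)`, paper edge `e_{i,i+1}` to `edge (i-1)`,
paper disk `Δ_i` to `disk (i-1)`, paper plane `P_i` to `P (i-1)`. -/
structure Hexagon where
  v : Fin 6 → E3

namespace Hexagon

variable (H : Hexagon)

/-- The closed edge from `v i` to `v (i+1)`. -/
def edge (i : Fin 6) : Set E3 := segment ℝ (H.v i) (H.v (i + 1))

/-- The open edge (interior of the edge) from `v i` to `v (i+1)`. -/
def intEdge (i : Fin 6) : Set E3 := openSegment ℝ (H.v i) (H.v (i + 1))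

/-- The hexagonal closed polygonal curve: union of the six edges. -/
def K : Set E3 := ⋃ i, H.edge i

/-- The triangular disk with vertices `v (i-1)`, `v i`, `v (i+1)`. -/
def disk (i : Fin 6) : Set E3 := convexHull ℝ ({H.v (i - 1), H.v i, H.v (i + 1)} : Set E3)

/-- The plane through `v (i-1)`, `v i`, `v (i+1)`. -/
def P (i : Fin 6) : AffineSubspace ℝ E3 :=
  affineSpan ℝ ({H.v (i - 1), H.v i, H.v (i + 1)} : Set E3)

/-- General position: no three vertices collinear, no four vertices coplanar. -/
def GeneralPosition : Prop :=
  (∀ i j k : Fin 6, i ≠ j → i ≠ k → j ≠ k →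
    ¬ Collinear ℝ ({H.v i, H.v j, H.v k} : Set E3)) ∧
  (∀ i j k l : Fin 6, i ≠ j → i ≠ k → i ≠ l → j ≠ k → j ≠ l → k ≠ l →
    ¬ Coplanar ℝ ({H.v i, H.v j, H.v k, H.v l} : Set E3))

/-- The Huh–Jeon intersection pattern: the only nonempty intersections of open edges with
interiors of triangular disks are `int e23 ∩ int Δ5`, `int e23 ∩ int Δ6`, `int e45 ∩ int Δ1`,
`int e45 ∩ int Δ2`, `int e61 ∩ int Δ3`, `int e61 ∩ int Δ4` (in the paper's labels). -/
def HuhJeon : Prop :=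
  ∀ i j : Fin 6, (H.intEdge i ∩ intrinsicInterior ℝ (H.disk j)).Nonempty ↔
    (i, j) ∈ ({(1, 4), (1, 5), (3, 0), (3, 1), (5, 2), (5, 3)} : Set (Fin 6 × Fin 6))

/-- The candidate quadrisecant line `L_{k+1}` of the paper: the intersection of the planes
`P (k+1)` and `P (k+4)` (for `k = 0, 1, 2`).  `QLine 0` is the paper's `L₁ = P₂ ∩ P₅`,
`QLine 1` is `L₂ = P₃ ∩ P₆`, and `QLine 2` is `L₃ = P₄ ∩ P₁`. -/
def QLine (k : Fin 6) : Set E3 := (H.P (k + 1) : Set E3) ∩ (H.P (k + 4) : Set E3)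

end Hexagon

/-- `L` is a quadrisecant of the curve `K`: a line meeting `K` in at least four points. -/
def IsQuadrisecantOf (K L : Set E3) : Prop :=
  IsLine L ∧ ∃ S : Finset E3, S.card = 4 ∧ (S : Set E3) ⊆ K ∩ L

/-- A quadrisecant of the hexagonal knot `H`. -/
def Hexagon.IsQuadrisecant (H : Hexagon) (L : Set E3) : Prop :=
  IsQuadrisecantOf H.K L

/-- A standard parametrization of the trefoil knot. -/
def trefoilCurve (t : ℝ) : E3 :=
  ![Real.sin t + 2 * Real.sin (2 * t), Real.cos t - 2 * Real.cos (2 * t), - Real.sin (3 * t)]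

/-- The standard trefoil knot as a subset of ℝ³. -/
def TrefoilSet : Set E3 := Set.range trefoilCurve

/-- The standard planar round circle (the unknot). -/
def UnknotSet : Set E3 := {x : E3 | x 0 ^ 2 + x 1 ^ 2 = 1 ∧ x 2 = 0}

/-- Two subsets of ℝ³ are equivalent as knots if there is an ambient isotopy of ℝ³
carrying one onto the other. -/
def KnotEquiv (K₁ K₂ : Set E3) : Prop :=
  ∃ F : ℝ → (E3 ≃ₜ E3), Continuous (fun p : ℝ × E3 => F p.1 p.2) ∧
    F 0 = Homeomorph.refl E3 ∧ (F 1) '' K₁ = K₂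

/-- `K` has the knot type of the trefoil. -/
def IsTrefoil (K : Set E3) : Prop := KnotEquiv K TrefoilSet

/-- `K` is an unknot: it has the knot type of a planar circle. -/
def IsUnknot (K : Set E3) : Prop := KnotEquiv K UnknotSet

/-- The closed polygonal curve with vertices `v 0, …, v (n-1)` joined cyclically. -/
def polyCurve (n : ℕ) [NeZero n] (v : Fin n → E3) : Set E3 :=
  ⋃ i, segment ℝ (v i) (v (i + 1))

/-- `v` determines an embedded (simple) closed polygonal curve: distinct vertices,
adjacent edges meet exactly at their common vertex, non-adjacent edges are disjoint. -/
def IsSimplePolygon (n : ℕ) [NeZero n] (v : Fin n → E3) : Prop :=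
  3 ≤ n ∧ Function.Injective v ∧
  (∀ i : Fin n,
    segment ℝ (v i) (v (i + 1)) ∩ segment ℝ (v (i + 1)) (v (i + 2)) = {v (i + 1)}) ∧
  (∀ i j : Fin n, j ≠ i → j ≠ i + 1 → j + 1 ≠ i →
    segment ℝ (v i) (v (i + 1)) ∩ segment ℝ (v j) (v (j + 1)) = ∅)

namespace Hexagon

/-- The quadrisecant approximation determined by marked points `c i`, `d i` on edge `i`:
`O i = [c i, d i]` (straightened part of edge `i`) and `N i = [d (i-1), c i]`
(the segment cutting the corner at `v i`). -/
def QA (H : Hexagon) (c d : Fin 6 → E3) : Set E3 :=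
  (⋃ i, segment ℝ (c i) (d i)) ∪ (⋃ i, segment ℝ (d (i - 1)) (c i))

/-- `c i`, `d i` are exactly the quadrisecant points on edge `i`, occurring in the
order `v i, c i, d i, v (i+1)` along the edge. -/
def QAData (H : Hexagon) (c d : Fin 6 → E3) : Prop :=
  ∀ i : Fin 6,
    ({c i, d i} : Set E3) = H.edge i ∩ (H.QLine 0 ∪ H.QLine 1 ∪ H.QLine 2) ∧
    Sbtw ℝ (H.v i) (c i) (d i) ∧ Sbtw ℝ (c i) (d i) (H.v (i + 1))

end Hexagon


open Matrix

lemma dot_affine (n a x y : E3) (α β : ℝ) (hαβ : α + β = 1) :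
    n ⬝ᵥ ((α • x + β • y) - a) = α * (n ⬝ᵥ (x - a)) + β * (n ⬝ᵥ (y - a)) := by
  simp only [dotProduct, Finset.mul_sum, ← Finset.sum_add_distrib]
  refine Finset.sum_congr rfl fun i _ => ?_
  simp only [Pi.add_apply, Pi.sub_apply, Pi.smul_apply, smul_eq_mul]
  linear_combination n i * a i * hαβ

lemma linIndep_of_not_collinear {a b c : E3} (h : ¬ Collinear ℝ ({a, b, c} : Set E3)) :
    LinearIndependent ℝ ![b - a, c - a] := by
  rw [LinearIndependent.pair_iff]
  intro s t hst
  by_contra hcon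
  apply h
  rw [collinear_iff_of_mem (Set.mem_insert a _)]
  by_cases hs : s = 0
  · have ht : t ≠ 0 := fun h' => hcon ⟨hs, h'⟩
    have hca : c = a := by
      have h1 : t • (c - a) = 0 := by rw [hs] at hst; simpa using hst
      exact sub_eq_zero.mp ((smul_eq_zero.mp h1).resolve_left ht)
    refine ⟨b - a, ?_⟩
    rintro p hp
    rcases hp with rfl | rfl | rfl
    · exact ⟨0, by simp⟩
    · exact ⟨1, by simp⟩
    · exact ⟨0, by simp [hca]⟩
  · refine ⟨c - a, ?_⟩
    have h1 : s • (b - a) = (-t) • (c - a) := by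
      rw [neg_smul]; exact eq_neg_of_add_eq_zero_left hst
    have h2 : s • ((-t/s) • (c - a)) = s • (b - a) := by
      rw [smul_smul, h1]; congr 1; field_simp
    have h3 : (-t/s) • (c - a) = b - a := smul_right_injective E3 hs h2
    rintro p hp
    rcases hp with rfl | rfl | rfl
    · exact ⟨0, by simp⟩
    · exact ⟨-t/s, by simp [h3]⟩
    · exact ⟨1, by simp⟩

lemma mem_plane_iff {a b c : E3} (h : LinearIndependent ℝ ![b - a, c - a]) (x : E3) :
    x ∈ affineSpan ℝ ({a, b, c} : Set E3) ↔ ((b - a) ⨯₃ (c - a)) ⬝ᵥ (x - a) = 0 := by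
  have ha : a ∈ ({a, b, c} : Set E3) := Set.mem_insert a _
  have hspan : vectorSpan ℝ ({a, b, c} : Set E3) = Submodule.span ℝ {b - a, c - a} := by
    rw [vectorSpan_eq_span_vsub_set_right ℝ ha]
    have himg : ((· -ᵥ a) '' {a, b, c} : Set E3) = insert 0 {b - a, c - a} := by
      simp [Set.image_insert_eq, vsub_eq_sub]
    rw [himg, Submodule.span_insert_zero]
  have key : x ∈ affineSpan ℝ ({a, b, c} : Set E3) ↔ x - a ∈ Submodule.span ℝ {b - a, c - a} := by
    rw [← hspan, ← direction_affineSpan]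
    exact (AffineSubspace.vsub_right_mem_direction_iff_mem (mem_affineSpan ℝ ha) x).symm
  rw [key, Submodule.mem_span_pair]
  constructor
  · rintro ⟨s, t, hst⟩
    rw [dotProduct_comm, ← hst, add_dotProduct, smul_dotProduct, smul_dotProduct,
      dot_self_cross, dot_cross_self]
    simp
  · intro hx
    have hdet : Matrix.det ![x - a, b - a, c - a] = 0 := by
      rw [← triple_product_eq_det, dotProduct_comm]; exact hx
    obtain ⟨g, hg0, hg⟩ := Matrix.exists_vecMul_eq_zero_iff.mpr hdet
    have hcomb : g 0 • (x - a) + g 1 • (b - a) + g 2 • (c - a) = 0 := by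
      funext j
      have hj := congrFun hg j
      simp only [Matrix.vecMul, dotProduct, Fin.sum_univ_three, Matrix.cons_val_zero,
        Matrix.cons_val_one, Matrix.head_cons, Pi.zero_apply, Pi.sub_apply,
        Matrix.cons_val_two, Matrix.tail_cons] at hj
      simp only [Pi.add_apply, Pi.smul_apply, Pi.sub_apply, Pi.zero_apply, smul_eq_mul]
      linarith [hj]
    by_cases h0 : g 0 = 0
    · exfalso
      have h12 : g 1 • (b - a) + g 2 • (c - a) = 0 := by
        rw [h0] at hcomb; simpa using hcomb
      obtain ⟨e1, e2⟩ := LinearIndependent.pair_iff.mp h (g 1) (g 2) h12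
      apply hg0
      funext i
      fin_cases i <;> simp [h0, e1, e2]
    · refine ⟨-(g 1)/g 0, -(g 2)/g 0, ?_⟩
      have hmul : g 0 • ((-(g 1)/g 0) • (b - a) + (-(g 2)/g 0) • (c - a)) = g 0 • (x - a) := by
        rw [smul_add, smul_smul, smul_smul]
        have e1 : g 0 * (-(g 1)/g 0) = -(g 1) := by field_simp
        have e2 : g 0 * (-(g 2)/g 0) = -(g 2) := by field_simp
        rw [e1, e2]
        funext i
        have hi := congrFun hcomb i
        simp only [Pi.add_apply, Pi.smul_apply, Pi.sub_apply, Pi.zero_apply, smul_eq_mul,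
          Pi.neg_apply, neg_smul] at hi ⊢
        linarith [hi]
      exact smul_right_injective E3 h0 hmul
/-- For a hexagonal trefoil knot with the Huh–Jeon pattern, the interior of the
edge `e12` meets the plane `P5` (through `v4, v5, v6`) in exactly one point. -/
theorem stmt4 (H : Hexagon) (hgp : H.GeneralPosition) (hhj : H.HuhJeon)
    (htre : IsTrefoil H.K) :
    ∃! x : E3, x ∈ H.intEdge 0 ∩ (H.P 4 : Set E3) := by
  obtain ⟨hcol, hcop⟩ := hgp
  have hli : LinearIndependent ℝ ![H.v 4 - H.v 3, H.v 5 - H.v 3] :=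
    linIndep_of_not_collinear (hcol 3 4 5 (by decide) (by decide) (by decide))
  set n : E3 := (H.v 4 - H.v 3) ⨯₃ (H.v 5 - H.v 3) with hn
  have hP4 : H.P 4 = affineSpan ℝ ({H.v 3, H.v 4, H.v 5} : Set E3) := by
    have h1 : (4 : Fin 6) - 1 = 3 := by decide
    have h2 : (4 : Fin 6) + 1 = 5 := by decide
    rw [Hexagon.P, h1, h2]
  have hP : ∀ x : E3, x ∈ (H.P 4 : Set E3) ↔ n ⬝ᵥ (x - H.v 3) = 0 := by
    intro x
    rw [hP4, AffineSubspace.mem_coe]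
    exact mem_plane_iff hli x
  -- vertices 0, 1, 2 are not on the plane
  have hnotmem : ∀ j : Fin 6, j ≠ 3 → j ≠ 4 → j ≠ 5 → n ⬝ᵥ (H.v j - H.v 3) ≠ 0 := by
    intro j h3 h4 h5 h0
    have hj : H.v j ∈ affineSpan ℝ ({H.v 3, H.v 4, H.v 5} : Set E3) :=
      (mem_plane_iff hli _).mpr h0
    have hcp : Coplanar ℝ ({H.v j, H.v 3, H.v 4, H.v 5} : Set E3) :=
      (coplanar_insert_iff_of_mem_affineSpan hj).mpr (coplanar_triple ℝ _ _ _)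
    exact hcop j 3 4 5 h3 h4 h5 (by decide) (by decide) (by decide) hcp
  have hF0 : n ⬝ᵥ (H.v 0 - H.v 3) ≠ 0 := hnotmem 0 (by decide) (by decide) (by decide)
  have hF1 : n ⬝ᵥ (H.v 1 - H.v 3) ≠ 0 := hnotmem 1 (by decide) (by decide) (by decide)
  have hF2 : n ⬝ᵥ (H.v 2 - H.v 3) ≠ 0 := hnotmem 2 (by decide) (by decide) (by decide)
  set F0 : ℝ := n ⬝ᵥ (H.v 0 - H.v 3) with hF0d
  set F1 : ℝ := n ⬝ᵥ (H.v 1 - H.v 3) with hF1d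
  set F2 : ℝ := n ⬝ᵥ (H.v 2 - H.v 3) with hF2d
  -- values of f on the plane's generators
  have hfa : n ⬝ᵥ (H.v 3 - H.v 3) = 0 := by simp
  have hfb : n ⬝ᵥ (H.v 4 - H.v 3) = 0 := by
    rw [hn, dotProduct_comm]; exact dot_self_cross _ _
  have hfc : n ⬝ᵥ (H.v 5 - H.v 3) = 0 := by
    rw [hn, dotProduct_comm]; exact dot_cross_self _ _
  -- the crossing point p of edge 1 with disk 4
  obtain ⟨p, hp1, hp2⟩ := (hhj 1 4).mpr (by simp)
  have hpP : n ⬝ᵥ (p - H.v 3) = 0 := by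
    refine (hP p).mp ?_
    rw [hP4]
    exact convexHull_subset_affineSpan _ (intrinsicInterior_subset hp2)
  rw [Hexagon.intEdge] at hp1
  obtain ⟨α, β, hα, hβ, hαβ, hpc⟩ := hp1
  have h12 : α * F1 + β * F2 = 0 := by
    rw [hF1d, hF2d, ← dot_affine n (H.v 3) (H.v 1) (H.v 2) α β hαβ]
    rw [show H.v 2 = H.v (1 + 1) from rfl, hpc]
    exact hpP
  -- the crossing point q of edge 5 with disk 3
  obtain ⟨q, hq1, hq2⟩ := (hhj 5 3).mpr (by simp)
  rw [Hexagon.intEdge] at hq1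
  obtain ⟨s1, s2, hs1, hs2, hs12, hqc⟩ := hq1
  have hfq : n ⬝ᵥ (q - H.v 3) = s2 * F0 := by
    rw [hF0d, ← hqc, show H.v (5 + 1) = H.v 0 from rfl,
      dot_affine n (H.v 3) (H.v 5) (H.v 0) s1 s2 hs12, hfc]
    ring
  have hqhull : q ∈ convexHull ℝ ({H.v 2, H.v 3, H.v 4} : Set E3) := by
    have : H.disk 3 = convexHull ℝ ({H.v 2, H.v 3, H.v 4} : Set E3) := by
      have h1 : (3 : Fin 6) - 1 = 2 := by decide
      have h2 : (3 : Fin 6) + 1 = 4 := by decide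
      rw [Hexagon.disk, h1, h2]
    rw [← this]
    exact intrinsicInterior_subset hq2
  rw [convexHull_insert (Set.insert_nonempty _ _), convexHull_pair, mem_convexJoin] at hqhull
  obtain ⟨x, hx, y, hy, hqs⟩ := hqhull
  obtain rfl : x = H.v 2 := hx
  obtain ⟨u1, u2, hu1, hu2, hu12, hyc⟩ := hy
  have hfy : n ⬝ᵥ (y - H.v 3) = 0 := by
    rw [← hyc, dot_affine n (H.v 3) (H.v 3) (H.v 4) u1 u2 hu12, hfa, hfb]
    ring
  obtain ⟨γ, δ, hγ, hδ, hγδ, hqc2⟩ := hqs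
  have hfq2 : n ⬝ᵥ (q - H.v 3) = γ * F2 := by
    rw [hF2d, ← hqc2, dot_affine n (H.v 3) (H.v 2) y γ δ hγδ, hfy]
    ring
  have hA : s2 * F0 = γ * F2 := by rw [← hfq, hfq2]
  have hγpos : 0 < γ := by
    rcases hγ.lt_or_eq with h | h
    · exact h
    · exfalso; apply hF0
      have : s2 * F0 = 0 := by rw [hA, ← h]; ring
      rcases mul_eq_zero.mp this with h' | h'
      · exact absurd h' (ne_of_gt hs2)
      · exact h'
  -- F0 * F1 < 0
  have hB : α * F1 = -(β * F2) := by linarith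
  have hprod : (s2 * F0) * (α * F1) = (γ * F2) * (-(β * F2)) := by rw [hA, hB]
  have key : F0 * F1 < 0 := by
    nlinarith [mul_pos hs2 hα, mul_pos (mul_pos hγpos hβ) (mul_self_pos.mpr hF2)]
  have hd : F0 - F1 ≠ 0 := by
    intro h
    have h' : F0 = F1 := by linarith
    rw [h'] at key
    linarith [mul_self_nonneg F1]
  set t : ℝ := F0 / (F0 - F1) with htd
  have ht : 0 < t ∧ t < 1 := by
    rcases mul_neg_iff.mp key with ⟨h0, h1⟩ | ⟨h0, h1⟩
    · constructor
      · exact div_pos h0 (by linarith)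
      · rw [htd, div_lt_one (by linarith)]; linarith
    · have ht' : t = (-F0) / (F1 - F0) := by
        rw [htd, ← neg_div_neg_eq]; congr 1; ring
      constructor
      · rw [ht']; exact div_pos (by linarith) (by linarith)
      · rw [ht', div_lt_one (by linarith)]; linarith
  refine ⟨(1 - t) • H.v 0 + t • H.v 1, ⟨?_, ?_⟩, ?_⟩
  · rw [Hexagon.intEdge]
    exact ⟨1 - t, t, by linarith [ht.2], ht.1, by ring, rfl⟩
  · rw [hP]
    rw [dot_affine n (H.v 3) (H.v 0) (H.v 1) (1 - t) t (by ring), ← hF0d, ← hF1d, htd]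
    field_simp
    ring
  · rintro z ⟨hz1, hz2⟩
    rw [Hexagon.intEdge] at hz1
    obtain ⟨a', b', ha', hb', hab', hzc⟩ := hz1
    have h0 : a' * F0 + b' * F1 = 0 := by
      rw [hF0d, hF1d, ← dot_affine n (H.v 3) (H.v 0) (H.v 1) a' b' hab',
        show H.v 1 = H.v (0 + 1) from rfl, hzc]
      exact (hP z).mp hz2
    have hb't : b' = t := by
      have hbt : b' * (F0 - F1) = F0 := by linear_combination -h0 + F0 * hab'
      rw [htd, eq_div_iff hd]
      exact hbt
    have ha't : a' = 1 - t := by rw [← hb't]; linarith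
    rw [← hzc, ha't, hb't]
    rfl
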